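/- Assume τ is an automorphism of F. Then: (i) for every b ∈ k[t], τ(Λ_b) = Λ_{τ(b)}, where τ(b) := b(t+1); (ii) if a = ∏_{i∈I} P_i^{r_i} is monic nonconstant with P_i pairwise distinct monic irreducible, and J ⊆ I satisfies (1) for distinct j_1, j_2 ∈ J and all h ∈ ℤ the polynomials P_{j_1} and τ^h(P_{j_2}) are coprime, and (2) for every i ∈ I∖J there exist h ∈ ℤ and j ∈ J with τ^h(P_i) = P_j and r_i ≤ r_j, then, setting â := ∏_{j∈J} P_j^{r_j}, the subfields of F generated by k(ν) together with Λ_a, respectively Λ_â, coincide: K(Λ_a) = K(Λ_â). -/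

import Mathlib

open Polynomial

noncomputable section

variable {F : Type*} [Field F]

/-- The fixed subfield `k = F^τ` of a difference field `(F, τ)`. -/
def kfix (τ : F →+* F) : Subfield F := RingHom.eqLocusField τ (RingHom.id F)

/-- `τ` as a `k`-linear endomorphism of `F`. -/
def tauLin (τ : F →+* F) : F →ₗ[kfix τ] F where
  toFun := τ
  map_add' := map_add τ
  map_smul' := by
    intro c x
    show τ ((c : F) * x) = (c : F) * τ x
    rw [map_mul, c.2]
    rfl

/-- The Carlitz module map `a ↦ C_a = a(μ_ν − τ)` : the unique `k`-algebra morphism from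
`k[t]` to the `k`-linear endomorphisms of `F` sending `t` to `μ_ν − τ`. -/
def carlitz (τ : F →+* F) (ν : F) : Polynomial (kfix τ) →ₐ[kfix τ] Module.End (kfix τ) F :=
  Polynomial.aeval (LinearMap.mulLeft (kfix τ) ν - tauLin τ)

set_option linter.unusedSectionVars false
set_option synthInstance.maxHeartbeats 1000000
set_option maxHeartbeats 1000000

namespace Stmt12Aux

variable {F : Type*} [Field F] [CharZero F] (τ : F ≃+* F) (ν : F)

local notation "𝕜" => kfix (τ : F →+* F)
local notation "L" => carlitz (τ : F →+* F) ν
local notation "T" => (LinearMap.mulLeft (kfix (τ : F →+* F)) ν - tauLin (τ : F →+* F))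

lemma tau_fix (a : 𝕜) : τ (a : F) = a := a.2

lemma T_apply (x : F) : T x = ν * x - τ x := rfl

lemma L_X : L X = T := aeval_X _

lemma L_mul_apply (p q : Polynomial 𝕜) (x : F) : L (p * q) x = L p (L q x) := by
  rw [map_mul]; rfl

lemma T_mem_ker {c : Polynomial 𝕜} {x : F} (hx : x ∈ LinearMap.ker (L c)) :
    T x ∈ LinearMap.ker (L c) := by
  rw [LinearMap.mem_ker] at hx ⊢
  rw [← L_X τ ν, ← L_mul_apply, mul_comm, L_mul_apply, hx, map_zero]

lemma T_pow_mem_ker {c : Polynomial 𝕜} {x : F} (hx : x ∈ LinearMap.ker (L c)) (i : ℕ) :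
    (T ^ i) x ∈ LinearMap.ker (L c) := by
  induction i with
  | zero => simpa using hx
  | succ n ih =>
      have : (T ^ (n + 1)) x = T ((T ^ n) x) := by rw [pow_succ']; rfl
      rw [this]; exact T_mem_ker τ ν ih

lemma ker_mono {c d : Polynomial 𝕜} (h : c ∣ d) :
    LinearMap.ker (L c) ≤ LinearMap.ker (L d) := by
  obtain ⟨e, rfl⟩ := h
  intro x hx
  rw [LinearMap.mem_ker] at hx ⊢
  rw [mul_comm, L_mul_apply, hx, map_zero]

lemma tau_T (hν : τ ν = ν + 1) (x : F) : τ (T x) = T (τ x) + τ x := by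
  rw [T_apply, T_apply, map_sub, map_mul, hν]
  ring

lemma tau_T_pow (hν : τ ν = ν + 1) (n : ℕ) (x : F) :
    τ ((T ^ n) x) = ((T + 1) ^ n) (τ x) := by
  induction n generalizing x with
  | zero => simp
  | succ n ih =>
      have h1 : (T ^ (n + 1)) x = (T ^ n) (T x) := by rw [pow_succ]; rfl
      have h2 : ((T + 1) ^ (n + 1)) (τ x) = ((T + 1) ^ n) ((T + 1) (τ x)) := by
        rw [pow_succ]; rfl
      rw [h1, ih, h2]
      congr 1
      rw [LinearMap.add_apply, Module.End.one_apply]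
      exact tau_T τ ν hν x

lemma tau_carlitz (hν : τ ν = ν + 1) (b : Polynomial 𝕜) (x : F) :
    τ (L b x) = L (b.comp (X + 1)) (τ x) := by
  induction b using Polynomial.induction_on' with
  | add p q hp hq =>
      rw [map_add, LinearMap.add_apply, map_add, add_comp, map_add, LinearMap.add_apply, hp, hq]
  | monomial n a =>
      have hL : L (monomial n a) x = a • ((T ^ n) x) := by
        rw [carlitz, aeval_monomial, Module.End.mul_apply, Module.algebraMap_end_apply]
      have hR : L ((monomial n a).comp (X + 1)) (τ x) = a • (((T + 1) ^ n) (τ x)) := by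
        rw [monomial_comp, carlitz, map_mul, aeval_C, map_pow, map_add, aeval_X, map_one,
          Module.End.mul_apply, Module.algebraMap_end_apply]
      rw [hL, hR]
      show τ ((a : F) * _) = (a : F) * _
      rw [map_mul, tau_fix τ, tau_T_pow τ ν hν]

lemma image_ker (hν : τ ν = ν + 1) (b : Polynomial 𝕜) :
    ⇑τ '' ((LinearMap.ker (L b) : Submodule 𝕜 F) : Set F) =
      ((LinearMap.ker (L (b.comp (X + 1))) : Submodule 𝕜 F) : Set F) := by
  ext y
  constructor
  · rintro ⟨x, hx, rfl⟩
    have hx' : L b x = 0 := hx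
    simp only [SetLike.mem_coe, LinearMap.mem_ker]
    rw [← tau_carlitz τ ν hν, hx', map_zero]
  · intro hy
    refine ⟨τ.symm y, ?_, τ.apply_symm_apply y⟩
    have hy' : L (b.comp (X + 1)) y = 0 := hy
    have : τ (L b (τ.symm y)) = 0 := by
      rw [tau_carlitz τ ν hν, τ.apply_symm_apply, hy']
    simpa only [SetLike.mem_coe, LinearMap.mem_ker, map_eq_zero_iff τ τ.injective] using this

lemma aeval_nu_ne_zero (hν : τ ν = ν + 1) {c : Polynomial 𝕜} (hc : c ≠ 0) :
    (aeval ν c : F) ≠ 0 := by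
  intro h0
  have key : ∀ y : F, τ (aeval y c : F) = aeval (τ y) c := by
    intro y
    have hcomp : (τ : F →+* F).comp (algebraMap 𝕜 F) = algebraMap 𝕜 F := by
      ext a
      exact tau_fix τ a
    have h1 := hom_eval₂ (g := (τ : F →+* F)) (f := algebraMap 𝕜 F) (p := c) y
    rw [hcomp] at h1
    rw [aeval_def, aeval_def]
    exact h1
  have roots : ∀ n : ℕ, (aeval (ν + (n : F)) c : F) = 0 := by
    intro n
    induction n with
    | zero => simpa using h0
    | succ m ih =>
        have := key (ν + (m : F))
        rw [ih, map_zero] at this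
        have h2 : τ (ν + (m : F)) = ν + ((m + 1 : ℕ) : F) := by
          rw [map_add, hν]
          push_cast
          have : τ ((m : F)) = (m : F) := by
            simpa using tau_fix τ ((m : ℕ) : 𝕜)
          rw [this]; ring
        rw [h2] at this
        exact this.symm
  set f : F[X] := c.map (algebraMap 𝕜 F) with hf
  have hfne : f ≠ 0 := by
    refine Polynomial.map_ne_zero_iff ?_ |>.mpr hc
    exact (algebraMap 𝕜 F).injective
  have hsub : Set.range (fun n : ℕ => ν + (n : F)) ⊆ {x | f.IsRoot x} := by
    rintro _ ⟨n, rfl⟩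
    have : (aeval (ν + (n : F)) c : F) = 0 := roots n
    rw [aeval_def, ← eval_map] at this
    exact this
  have hinj : Function.Injective (fun n : ℕ => ν + (n : F)) := by
    intro m n hmn
    simp only [add_right_inj] at hmn
    exact Nat.cast_injective hmn
  exact absurd (Polynomial.finite_setOf_isRoot hfne)
    ((Set.infinite_range_of_injective hinj).mono hsub)

/-- `K(Λ_c)`: subfield generated by `k`, `ν` and `Λ_c`. -/
def KL (c : Polynomial 𝕜) : Subfield F :=
  Subfield.closure (((kfix (τ : F →+* F) : Set F) ∪ {ν}) ∪
    ((LinearMap.ker (L c) : Submodule 𝕜 F) : Set F))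

lemma nu_mem_KL (c : Polynomial 𝕜) : ν ∈ KL τ ν c :=
  Subfield.subset_closure (Or.inl (Or.inr rfl))

lemma coe_mem_KL (c : Polynomial 𝕜) (a : 𝕜) : (a : F) ∈ KL τ ν c :=
  Subfield.subset_closure (Or.inl (Or.inl a.2))

lemma ker_subset_KL (c : Polynomial 𝕜) {x : F} (hx : x ∈ LinearMap.ker (L c)) :
    x ∈ KL τ ν c :=
  Subfield.subset_closure (Or.inr hx)

lemma KL_le_iff {c : Polynomial 𝕜} {E : Subfield F} :
    KL τ ν c ≤ E ↔ (kfix (τ : F →+* F) : Set F) ⊆ E ∧ ν ∈ E ∧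
      ((LinearMap.ker (L c) : Submodule 𝕜 F) : Set F) ⊆ E := by
  rw [KL, Subfield.closure_le, Set.union_subset_iff, Set.union_subset_iff,
    Set.singleton_subset_iff]
  tauto

lemma KL_mono {c d : Polynomial 𝕜} (h : c ∣ d) : KL τ ν c ≤ KL τ ν d := by
  rw [KL_le_iff]
  exact ⟨fun a ha => Subfield.subset_closure (Or.inl (Or.inl ha)), nu_mem_KL τ ν d,
    fun x hx => ker_subset_KL τ ν d (ker_mono τ ν h hx)⟩

lemma KL_shift_one (hν : τ ν = ν + 1) (c : Polynomial 𝕜) (hc : c ≠ 0) :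
    KL τ ν c = KL τ ν (c.comp (X + 1)) := by
  by_cases hd : c.natDegree = 0
  · have : c.comp (X + 1) = c := by
      conv_lhs => rw [Polynomial.eq_C_of_natDegree_eq_zero hd]
      rw [C_comp, ← Polynomial.eq_C_of_natDegree_eq_zero hd]
    rw [this]
  · apply le_antisymm
    · -- hard direction : Λ_c ⊆ K(Λ_{c(t+1)})
      rw [KL_le_iff]
      refine ⟨fun a ha => Subfield.subset_closure (Or.inl (Or.inl ha)),
        nu_mem_KL τ ν _, ?_⟩
      intro x hx
      set E := KL τ ν (c.comp (X + 1)) with hE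
      -- step 1
      have step1 : ∀ z ∈ LinearMap.ker (L c), ν * z - T z ∈ E := by
        intro z hz
        have h1 : ν * z - T z = τ z := by rw [T_apply]; ring
        rw [h1]
        apply ker_subset_KL
        rw [LinearMap.mem_ker, ← tau_carlitz τ ν hν, LinearMap.mem_ker.mp hz, map_zero]
      -- step 2
      have step2 : ∀ i : ℕ, ∀ z ∈ LinearMap.ker (L c), ν ^ i * z - (T ^ i) z ∈ E := by
        intro i
        induction i with
        | zero => intro z hz; simpa using zero_mem E
        | succ n ih =>
            intro z hz
            have hT : (T ^ (n + 1)) z = T ((T ^ n) z) := by rw [pow_succ']; rfl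
            have key : ν ^ (n + 1) * z - (T ^ (n + 1)) z =
                ν * (ν ^ n * z - (T ^ n) z) + (ν * ((T ^ n) z) - T ((T ^ n) z)) := by
              rw [hT]; ring
            rw [key]
            exact add_mem (mul_mem (nu_mem_KL τ ν _) (ih z hz))
              (step1 _ (T_pow_mem_ker τ ν hz n))
      -- step 3 : c(ν) * x ∈ E
      have hx0 : L c x = 0 := LinearMap.mem_ker.mp hx
      have expand : (aeval ν c : F) * x - L c x =
          ∑ i ∈ Finset.range (c.natDegree + 1),
            (c.coeff i : F) * (ν ^ i * x - (T ^ i) x) := by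
        rw [aeval_eq_sum_range (R := 𝕜) (x := ν) (p := c)]
        have hLc : L c x = ∑ i ∈ Finset.range (c.natDegree + 1),
            (c.coeff i : F) * ((T ^ i) x) := by
          rw [carlitz, aeval_eq_sum_range (x := T) (p := c)]
          rw [LinearMap.sum_apply]
          refine Finset.sum_congr rfl fun i _ => ?_
          rw [LinearMap.smul_apply]
          rfl
        rw [hLc, Finset.sum_mul, ← Finset.sum_sub_distrib]
        refine Finset.sum_congr rfl fun i _ => ?_
        show (c.coeff i : F) * ν ^ i * x - _ = _
        ring
      have hmem : (aeval ν c : F) * x ∈ E := by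
        have : (aeval ν c : F) * x - L c x ∈ E := by
          rw [expand]
          exact Subfield.sum_mem _ fun i _ =>
            mul_mem (coe_mem_KL τ ν _ _) (step2 i x hx)
        rwa [hx0, sub_zero] at this
      have hne := aeval_nu_ne_zero τ ν hν hc
      have : x = (aeval ν c : F)⁻¹ * ((aeval ν c : F) * x) := by
        field_simp
      rw [this]
      have haev : (aeval ν c : F) ∈ E := by
        rw [aeval_eq_sum_range (R := 𝕜) (x := ν) (p := c)]
        refine Subfield.sum_mem _ fun i _ => ?_
        show (c.coeff i : F) * ν ^ i ∈ E
        exact mul_mem (coe_mem_KL τ ν _ _) (pow_mem (nu_mem_KL τ ν _) i)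
      exact mul_mem (Subfield.inv_mem _ haev) hmem
    · -- easy direction
      rw [KL_le_iff]
      refine ⟨fun a ha => Subfield.subset_closure (Or.inl (Or.inl ha)),
        nu_mem_KL τ ν _, ?_⟩
      intro y hy
      have : y ∈ ⇑τ '' ((LinearMap.ker (L c) : Submodule 𝕜 F) : Set F) := by
        rw [image_ker τ ν hν]; exact hy
      obtain ⟨x, hx, rfl⟩ := this
      have h1 : τ x = ν * x - T x := by rw [T_apply]; ring
      rw [h1]
      exact sub_mem (mul_mem (nu_mem_KL τ ν _) (ker_subset_KL τ ν _ hx))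
        (ker_subset_KL τ ν _ (T_mem_ker τ ν hx))

lemma comp_shift_ne_zero {c : Polynomial 𝕜} (hc : c ≠ 0) (h : 𝕜) :
    c.comp (X + C h) ≠ 0 := by
  intro h0
  apply hc
  have : (c.comp (X + C h)).comp (X + C (-h)) = c := by
    rw [comp_assoc]
    have : (X + C h).comp (X + C (-h)) = X := by
      rw [add_comp, X_comp, C_comp, add_assoc, ← C_add, neg_add_cancel, C_0, add_zero]
    rw [this, comp_X]
  rw [← this, h0, zero_comp]

lemma comp_comp_one (c : Polynomial 𝕜) (h : 𝕜) :
    (c.comp (X + C h)).comp (X + 1) = c.comp (X + C (h + 1)) := by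
  rw [comp_assoc, add_comp, X_comp, C_comp, C_add, C_1]
  ring_nf

lemma KL_shift (hν : τ ν = ν + 1) {c : Polynomial 𝕜} (hc : c ≠ 0) (h : ℤ) :
    KL τ ν (c.comp (X + C ((h : ℤ) : 𝕜))) = KL τ ν c := by
  induction h using Int.induction_on with
  | zero => simp
  | succ n ih =>
      have e1 : c.comp (X + C (((n : ℤ) + 1 : ℤ) : 𝕜)) =
          (c.comp (X + C ((n : ℤ) : 𝕜))).comp (X + 1) := by
        rw [comp_comp_one]
        push_cast
        ring_nf
      rw [e1, ← KL_shift_one τ ν hν _ (comp_shift_ne_zero τ hc _)]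
      exact ih
  | pred n ih =>
      have e1 : (c.comp (X + C ((-(n : ℤ) - 1 : ℤ) : 𝕜))).comp (X + 1) =
          c.comp (X + C ((-(n : ℤ) : ℤ) : 𝕜)) := by
        rw [comp_comp_one]
        push_cast
        ring_nf
      rw [← ih, ← e1, ← KL_shift_one τ ν hν _ (comp_shift_ne_zero τ hc _)]

lemma ker_prod_subset {I : Type} (E : Subfield F) (s : Finset I) (q : I → Polynomial 𝕜)
    (hcop : ∀ i ∈ s, ∀ j ∈ s, i ≠ j → IsCoprime (q i) (q j))
    (hE : ∀ i ∈ s, ∀ x, x ∈ LinearMap.ker (L (q i)) → x ∈ E) :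
    ∀ x ∈ LinearMap.ker (L (∏ i ∈ s, q i)), x ∈ E := by
  classical
  induction s using Finset.induction_on with
  | empty =>
      intro x hx
      rw [Finset.prod_empty, LinearMap.mem_ker, map_one, Module.End.one_apply] at hx
      rw [hx]; exact zero_mem E
  | insert a s hanotin ih =>
      intro x hx
      rw [Finset.prod_insert hanotin] at hx
      have hcopr : IsCoprime (q a) (∏ i ∈ s, q i) := by
        apply IsCoprime.prod_right
        intro i hi
        exact hcop a (Finset.mem_insert_self a s) i (Finset.mem_insert_of_mem hi)
          (fun hai => hanotin (hai ▸ hi))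
      obtain ⟨u, v, huv⟩ := hcopr
      have hx' : L (q a * ∏ i ∈ s, q i) x = 0 := LinearMap.mem_ker.mp hx
      have hxsplit : x = L (u * q a) x + L (v * ∏ i ∈ s, q i) x := by
        calc x = L (u * q a + v * ∏ i ∈ s, q i) x := by
              rw [huv, map_one, Module.End.one_apply]
          _ = L (u * q a) x + L (v * ∏ i ∈ s, q i) x := by
              rw [map_add, LinearMap.add_apply]
      have h1 : L (v * ∏ i ∈ s, q i) x ∈ E := by
        apply hE a (Finset.mem_insert_self a s)
        rw [LinearMap.mem_ker, ← L_mul_apply]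
        have : q a * (v * ∏ i ∈ s, q i) = v * (q a * ∏ i ∈ s, q i) := by ring
        rw [this, L_mul_apply, hx', map_zero]
      have h2 : L (u * q a) x ∈ E := by
        apply ih (fun i hi j hj hij => hcop i (Finset.mem_insert_of_mem hi) j
          (Finset.mem_insert_of_mem hj) hij)
          (fun i hi => hE i (Finset.mem_insert_of_mem hi))
        rw [LinearMap.mem_ker, ← L_mul_apply]
        have : (∏ i ∈ s, q i) * (u * q a) = u * (q a * ∏ i ∈ s, q i) := by ring
        rw [this, L_mul_apply, hx', map_zero]
      rw [hxsplit]
      exact add_mem h2 h1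

lemma coprime_pow_of_ne {p q : Polynomial 𝕜} (hp : p.Monic) (hq : q.Monic)
    (hip : Irreducible p) (hiq : Irreducible q) (hne : p ≠ q) (m n : ℕ) :
    IsCoprime (p ^ m) (q ^ n) := by
  apply IsCoprime.pow
  rw [Irreducible.coprime_iff_not_dvd hip]
  intro hdvd
  exact hne (Polynomial.eq_of_monic_of_associated hp hq
    (hip.associated_of_dvd hiq hdvd))

end Stmt12Aux

/-- (i) `τ(Λ_b) = Λ_{τ(b)}` with `τ(b) = b(t+1)`; (ii) if
`a = ∏_{i∈I} P_i^{r_i}` is monic nonconstant with the `P_i` pairwise distinct monic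
irreducible, and `J ⊆ I` is such that (1) for distinct `j₁, j₂ ∈ J` and all `h ∈ ℤ`,
`P_{j₁}` and `τ^h(P_{j₂})` are coprime, and (2) every `i ∈ I∖J` satisfies
`τ^h(P_i) = P_j` for some `h ∈ ℤ`, `j ∈ J` with `r_i ≤ r_j`, then
`K(Λ_a) = K(Λ_â)` where `â = ∏_{j∈J} P_j^{r_j}` and `K = k(ν)`. -/
theorem stmt_12 {F : Type*} [Field F] [CharZero F] (τ : F ≃+* F) (ν : F)
    (hν : τ ν = ν + 1) :
    (∀ b : Polynomial (kfix (τ : F →+* F)),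
      ⇑τ '' ((LinearMap.ker (carlitz (τ : F →+* F) ν b) : Submodule _ F) : Set F) =
        ((LinearMap.ker (carlitz (τ : F →+* F) ν (b.comp (X + 1))) : Submodule _ F) : Set F))
    ∧
    (∀ (I : Type) [Fintype I] (P : I → Polynomial (kfix (τ : F →+* F))) (r : I → ℕ)
      (J : Finset I),
      (∀ i, (P i).Monic) → (∀ i, Irreducible (P i)) → Function.Injective P →
      (∀ i, 1 ≤ r i) → 0 < (∏ i, P i ^ r i).natDegree →
      (∀ j₁ ∈ J, ∀ j₂ ∈ J, j₁ ≠ j₂ → ∀ h : ℤ,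
        IsCoprime (P j₁) ((P j₂).comp (X + C (h : kfix (τ : F →+* F))))) →
      (∀ i ∉ J, ∃ h : ℤ, ∃ j ∈ J,
        (P i).comp (X + C (h : kfix (τ : F →+* F))) = P j ∧ r i ≤ r j) →
      Subfield.closure (((kfix (τ : F →+* F) : Set F) ∪ {ν}) ∪
          ((LinearMap.ker (carlitz (τ : F →+* F) ν (∏ i, P i ^ r i)) : Submodule _ F) : Set F)) =
        Subfield.closure (((kfix (τ : F →+* F) : Set F) ∪ {ν}) ∪
          ((LinearMap.ker (carlitz (τ : F →+* F) ν (∏ j ∈ J, P j ^ r j)) : Submodule _ F) : Set F))) := by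
  constructor
  · exact fun b => Stmt12Aux.image_ker τ ν hν b
  · intro I _ P r J hmon hirr hinj hr hdeg hcopJ hshift
    show Stmt12Aux.KL τ ν (∏ i, P i ^ r i) = Stmt12Aux.KL τ ν (∏ j ∈ J, P j ^ r j)
    apply le_antisymm
    · rw [Stmt12Aux.KL_le_iff]
      refine ⟨fun a ha => Subfield.subset_closure (Or.inl (Or.inl ha)),
        Stmt12Aux.nu_mem_KL τ ν _, ?_⟩
      intro x hx
      apply Stmt12Aux.ker_prod_subset τ ν _ Finset.univ (fun i => P i ^ r i) ?_ ?_ x hx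
      · intro i _ j _ hij
        exact Stmt12Aux.coprime_pow_of_ne τ (hmon i) (hmon j) (hirr i) (hirr j)
          (fun he => hij (hinj he)) _ _
      · intro i _ y hy
        by_cases hiJ : i ∈ J
        · exact Stmt12Aux.ker_subset_KL τ ν _
            (Stmt12Aux.ker_mono τ ν (Finset.dvd_prod_of_mem _ hiJ) hy)
        · obtain ⟨h, j, hjJ, hcomp, hle⟩ := hshift i hiJ
          have hne : P i ^ r i ≠ 0 := pow_ne_zero _ (hmon i).ne_zero
          have e1 : (P i ^ r i).comp (X + C ((h : ℤ) : kfix (τ : F →+* F))) = P j ^ r i := by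
            rw [pow_comp, hcomp]
          have e2 : Stmt12Aux.KL τ ν (P j ^ r i) = Stmt12Aux.KL τ ν (P i ^ r i) := by
            rw [← e1]; exact Stmt12Aux.KL_shift τ ν hν hne h
          have hyKL : y ∈ Stmt12Aux.KL τ ν (P i ^ r i) := Stmt12Aux.ker_subset_KL τ ν _ hy
          rw [← e2] at hyKL
          have le1 : Stmt12Aux.KL τ ν (P j ^ r i) ≤ Stmt12Aux.KL τ ν (∏ j ∈ J, P j ^ r j) :=
            le_trans (Stmt12Aux.KL_mono τ ν (pow_dvd_pow _ hle))
              (Stmt12Aux.KL_mono τ ν (Finset.dvd_prod_of_mem _ hjJ))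
          exact le1 hyKL
    · exact Stmt12Aux.KL_mono τ ν
        (Finset.prod_dvd_prod_of_subset J Finset.univ _ (Finset.subset_univ J))
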